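/- arXiv:1410.5794 — 2 statements merged into one kernel-verified Lean document; each statement's English description precedes it below -/
import Mathlib

section
/- Let M be a 4×4 complex matrix with rows and columns both indexed by the set {l, m, 4, 5}. For tuples C of distinct row indices and D of distinct column indices taken from {l, m}, define the 6-vector V^{C,D} = (M^{C,D}, M^{C45,D45}, M^{C4,D4}, M^{C5,D5}, M^{C5,D4}, M^{C4,D5}), where juxtaposition appends indices (e.g. C45 appends 4 and 5 to the row tuple C) and M^{A,B} is the corresponding minor. Then the vector V^{l,m} satisfies ⟨V^{l,m}, V^{l,m}⟩ = 0, ⟨V^{l,m}, V^{∅,∅}⟩ = 0, ⟨V^{l,m}, V^{l,l}⟩ = 0, ⟨V^{l,m}, V^{m,m}⟩ = 0 and ⟨V^{l,m}, V^{lm,lm}⟩ = 0, where ⟨X,Y⟩ = X_1Y_2 + X_2Y_1 − X_3Y_4 − X_4Y_3 + X_5Y_6 + X_6Y_5. -/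
/-- The minor `M^{A,B}` of a matrix `M` with rows selected by the tuple `A`
and columns selected by the tuple `B`; for `s = 0` this equals `1`. -/
noncomputable def minor {I : Type*} (M : I → I → ℂ) {s : ℕ}
    (A : Fin s → I) (B : Fin s → I) : ℂ :=
  Matrix.det (Matrix.of fun α β => M (A α) (B β))

/-- The inner product on `ℂ⁶` with respect to the block-diagonal metric
`diag([[0,1],[1,0]], −[[0,1],[1,0]], [[0,1],[1,0]])`. -/
def form (X Y : Fin 6 → ℂ) : ℂ :=
  X 0 * Y 1 + X 1 * Y 0 - X 2 * Y 3 - X 3 * Y 2 + X 4 * Y 5 + X 5 * Y 4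

/-- The 6-vector `V^{C,D} = (M^{C,D}, M^{C45,D45}, M^{C4,D4}, M^{C5,D5}, M^{C5,D4}, M^{C4,D5})`,
where `i4` and `i5` play the roles of the indices `4` and `5`. -/
noncomputable def vvec {I : Type*} (M : I → I → ℂ) (i4 i5 : I) {s : ℕ}
    (C D : Fin s → I) : Fin 6 → ℂ :=
  ![minor M C D,
    minor M (Fin.append C ![i4, i5]) (Fin.append D ![i4, i5]),
    minor M (Fin.append C ![i4]) (Fin.append D ![i4]),
    minor M (Fin.append C ![i5]) (Fin.append D ![i5]),
    minor M (Fin.append C ![i5]) (Fin.append D ![i4]),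
    minor M (Fin.append C ![i4]) (Fin.append D ![i5])]

namespace DLO

lemma ap01 {I : Type*} (a : I) : Fin.append (![] : Fin 0 → I) ![a] = ![a] := by
  ext i; fin_cases i <;> rfl
lemma ap02 {I : Type*} (a b : I) : Fin.append (![] : Fin 0 → I) ![a,b] = ![a,b] := by
  ext i; fin_cases i <;> rfl
lemma ap11 {I : Type*} (a b : I) : Fin.append ![a] ![b] = ![a,b] := by
  ext i; fin_cases i <;> rfl
lemma ap12 {I : Type*} (a b c : I) : Fin.append ![a] ![b,c] = ![a,b,c] := by
  ext i; fin_cases i <;> rfl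
lemma ap21 {I : Type*} (a b c : I) : Fin.append ![a,b] ![c] = ![a,b,c] := by
  ext i; fin_cases i <;> rfl
lemma ap22 {I : Type*} (a b c d : I) : Fin.append ![a,b] ![c,d] = ![a,b,c,d] := by
  ext i; fin_cases i <;> rfl

lemma fs2 : (Fin.succ 2 : Fin 4) = 3 := rfl
lemma fc2 : ((2 : Fin 3).castSucc : Fin 4) = 2 := rfl

lemma det_fin_four' (A : Matrix (Fin 4) (Fin 4) ℂ) : A.det =
    A 0 0 * (A 1 1 * (A 2 2 * A 3 3 - A 2 3 * A 3 2) - A 1 2 * (A 2 1 * A 3 3 - A 2 3 * A 3 1)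
      + A 1 3 * (A 2 1 * A 3 2 - A 2 2 * A 3 1))
  - A 0 1 * (A 1 0 * (A 2 2 * A 3 3 - A 2 3 * A 3 2) - A 1 2 * (A 2 0 * A 3 3 - A 2 3 * A 3 0)
      + A 1 3 * (A 2 0 * A 3 2 - A 2 2 * A 3 0))
  + A 0 2 * (A 1 0 * (A 2 1 * A 3 3 - A 2 3 * A 3 1) - A 1 1 * (A 2 0 * A 3 3 - A 2 3 * A 3 0)
      + A 1 3 * (A 2 0 * A 3 1 - A 2 1 * A 3 0))
  - A 0 3 * (A 1 0 * (A 2 1 * A 3 2 - A 2 2 * A 3 1) - A 1 1 * (A 2 0 * A 3 2 - A 2 2 * A 3 0)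
      + A 1 2 * (A 2 0 * A 3 1 - A 2 1 * A 3 0)) := by
  rw [Matrix.det_succ_row_zero]
  simp [Fin.sum_univ_succ, Matrix.det_fin_three, Fin.succAbove, Matrix.submatrix_apply,
    fs2, fc2]
  ring

variable {I : Type*} (M : I → I → ℂ)

lemma minor0 (A B : Fin 0 → I) : minor M A B = 1 := by
  simp [minor]

lemma minor1 (a b : I) : minor M ![a] ![b] = M a b := by
  simp [minor]

lemma minor2 (a b c d : I) :
    minor M ![a,b] ![c,d] = M a c * M b d - M a d * M b c := by
  simp [minor, Matrix.det_fin_two]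

lemma minor3 (a b c d e f : I) :
    minor M ![a,b,c] ![d,e,f] =
      M a d * (M b e * M c f - M b f * M c e)
      - M a e * (M b d * M c f - M b f * M c d)
      + M a f * (M b d * M c e - M b e * M c d) := by
  simp [minor, Matrix.det_fin_three]; ring

lemma minor4 (a b c d e f g h : I) :
    minor M ![a,b,c,d] ![e,f,g,h] =
      M a e * (M b f * (M c g * M d h - M c h * M d g) - M b g * (M c f * M d h - M c h * M d f)
        + M b h * (M c f * M d g - M c g * M d f))
    - M a f * (M b e * (M c g * M d h - M c h * M d g) - M b g * (M c e * M d h - M c h * M d e)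
        + M b h * (M c e * M d g - M c g * M d e))
    + M a g * (M b e * (M c f * M d h - M c h * M d f) - M b f * (M c e * M d h - M c h * M d e)
        + M b h * (M c e * M d f - M c f * M d e))
    - M a h * (M b e * (M c f * M d g - M c g * M d f) - M b f * (M c e * M d g - M c g * M d e)
        + M b g * (M c e * M d f - M c f * M d e)) := by
  rw [minor, det_fin_four']
  simp

lemma form_vvec (i4 i5 : I) {s t : ℕ} (C D : Fin s → I) (C' D' : Fin t → I) :
    form (vvec M i4 i5 C D) (vvec M i4 i5 C' D') =
      minor M C D * minor M (Fin.append C' ![i4,i5]) (Fin.append D' ![i4,i5])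
      + minor M (Fin.append C ![i4,i5]) (Fin.append D ![i4,i5]) * minor M C' D'
      - minor M (Fin.append C ![i4]) (Fin.append D ![i4]) * minor M (Fin.append C' ![i5]) (Fin.append D' ![i5])
      - minor M (Fin.append C ![i5]) (Fin.append D ![i5]) * minor M (Fin.append C' ![i4]) (Fin.append D' ![i4])
      + minor M (Fin.append C ![i5]) (Fin.append D ![i4]) * minor M (Fin.append C' ![i4]) (Fin.append D' ![i5])
      + minor M (Fin.append C ![i4]) (Fin.append D ![i5]) * minor M (Fin.append C' ![i5]) (Fin.append D' ![i4]) := rfl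

end DLO

open DLO in
/-- For a 4×4 matrix with rows and columns indexed by `{l, m, 4, 5}`, the vector
`V^{l,m}` satisfies `⟨V^{l,m},V^{l,m}⟩ = ⟨V^{l,m},V^{∅,∅}⟩ = ⟨V^{l,m},V^{l,l}⟩ =
⟨V^{l,m},V^{m,m}⟩ = ⟨V^{l,m},V^{lm,lm}⟩ = 0`. -/
theorem diagonal_line_orthogonality {I : Type*} (M : I → I → ℂ) (l m i4 i5 : I)
    (h1 : l ≠ m) (h2 : l ≠ i4) (h3 : l ≠ i5)
    (h4 : m ≠ i4) (h5 : m ≠ i5) (h6 : i4 ≠ i5) :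
    form (vvec M i4 i5 ![l] ![m]) (vvec M i4 i5 ![l] ![m]) = 0
      ∧ form (vvec M i4 i5 ![l] ![m]) (vvec M i4 i5 (![] : Fin 0 → I) (![] : Fin 0 → I)) = 0
      ∧ form (vvec M i4 i5 ![l] ![m]) (vvec M i4 i5 ![l] ![l]) = 0
      ∧ form (vvec M i4 i5 ![l] ![m]) (vvec M i4 i5 ![m] ![m]) = 0
      ∧ form (vvec M i4 i5 ![l] ![m]) (vvec M i4 i5 ![l, m] ![l, m]) = 0 := by
  refine ⟨?_, ?_, ?_, ?_, ?_⟩ <;>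
  · rw [form_vvec]
    simp only [ap01, ap02, ap11, ap12, ap21, ap22,
      minor0, minor1, minor2, minor3, minor4]
    ring
end

section
/- Let M be a 5×5 complex matrix with rows and columns both indexed by the set {l, m, p, 4, 5}. For tuples C of distinct row indices and D of distinct column indices taken from {l, m, p}, define the 6-vector V^{C,D} = (M^{C,D}, M^{C45,D45}, M^{C4,D4}, M^{C5,D5}, M^{C5,D4}, M^{C4,D5}). Then ⟨V^{l,m}, V^{pl,pm}⟩ = 0 and ⟨V^{l,m}, V^{p,m}⟩ = 0, where ⟨X,Y⟩ = X_1Y_2 + X_2Y_1 − X_3Y_4 − X_4Y_3 + X_5Y_6 + X_6Y_5. -/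
set_option maxHeartbeats 2000000

private lemma app11 {I : Type*} (a b : I) : Fin.append ![a] ![b] = ![a, b] := by
  ext i; fin_cases i <;> rfl

private lemma app12 {I : Type*} (a b c : I) : Fin.append ![a] ![b, c] = ![a, b, c] := by
  ext i; fin_cases i <;> rfl

private lemma app21 {I : Type*} (a b c : I) : Fin.append ![a, b] ![c] = ![a, b, c] := by
  ext i; fin_cases i <;> rfl

private lemma app22 {I : Type*} (a b c d : I) :
    Fin.append ![a, b] ![c, d] = ![a, b, c, d] := by
  ext i; fin_cases i <;> rfl

private lemma minor1 {I : Type*} (M : I → I → ℂ) (a b : I) :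
    minor M ![a] ![b] = M a b := by
  simp [minor]

private lemma minor2 {I : Type*} (M : I → I → ℂ) (a b c d : I) :
    minor M ![a, b] ![c, d] = M a c * M b d - M a d * M b c := by
  simp [minor, Matrix.det_fin_two]

private lemma minor3 {I : Type*} (M : I → I → ℂ) (a b c d e f : I) :
    minor M ![a, b, c] ![d, e, f] =
      M a d * M b e * M c f - M a d * M b f * M c e - M a e * M b d * M c f
        + M a e * M b f * M c d + M a f * M b d * M c e - M a f * M b e * M c d := by
  simp [minor, Matrix.det_fin_three]

private lemma minor4 {I : Type*} (M : I → I → ℂ) (a b c d e f g h : I) :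
    minor M ![a, b, c, d] ![e, f, g, h] =
      M a e * minor M ![b, c, d] ![f, g, h] - M a f * minor M ![b, c, d] ![e, g, h]
        + M a g * minor M ![b, c, d] ![e, f, h] - M a h * minor M ![b, c, d] ![e, f, g] := by
  simp only [minor]
  rw [Matrix.det_succ_row_zero]
  simp [Fin.sum_univ_succ, Matrix.det_fin_three, Matrix.submatrix, Fin.succAbove_zero, Fin.succ_succAbove_zero, Fin.succ_succAbove_succ, Fin.succ_succAbove_one]
  simp only [show ((![e, f, g, h] : Fin 4 → I) (Fin.succAbove 2 2)) = h from rfl,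
    show ((![e, f, g, h] : Fin 4 → I) (Fin.succAbove 3 2)) = g from rfl,
    show ((![e, f, g, h] : Fin 4 → I) (Fin.succAbove 1 2)) = h from rfl]
  ring

private lemma vvec0 {I : Type*} (M : I → I → ℂ) (i4 i5 : I) {s : ℕ} (C D : Fin s → I) :
    vvec M i4 i5 C D 0 = minor M C D := rfl
private lemma vvec1 {I : Type*} (M : I → I → ℂ) (i4 i5 : I) {s : ℕ} (C D : Fin s → I) :
    vvec M i4 i5 C D 1 = minor M (Fin.append C ![i4, i5]) (Fin.append D ![i4, i5]) := rfl
private lemma vvec2 {I : Type*} (M : I → I → ℂ) (i4 i5 : I) {s : ℕ} (C D : Fin s → I) :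
    vvec M i4 i5 C D 2 = minor M (Fin.append C ![i4]) (Fin.append D ![i4]) := rfl
private lemma vvec3 {I : Type*} (M : I → I → ℂ) (i4 i5 : I) {s : ℕ} (C D : Fin s → I) :
    vvec M i4 i5 C D 3 = minor M (Fin.append C ![i5]) (Fin.append D ![i5]) := rfl
private lemma vvec4 {I : Type*} (M : I → I → ℂ) (i4 i5 : I) {s : ℕ} (C D : Fin s → I) :
    vvec M i4 i5 C D 4 = minor M (Fin.append C ![i5]) (Fin.append D ![i4]) := rfl
private lemma vvec5 {I : Type*} (M : I → I → ℂ) (i4 i5 : I) {s : ℕ} (C D : Fin s → I) :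
    vvec M i4 i5 C D 5 = minor M (Fin.append C ![i4]) (Fin.append D ![i5]) := rfl

/-- For a 5×5 matrix with rows and columns indexed by `{l, m, p, 4, 5}`, the
coplanarity identities `⟨V^{l,m}, V^{pl,pm}⟩ = 0` and `⟨V^{l,m}, V^{p,m}⟩ = 0` hold. -/
theorem coplanarity_orthogonality {I : Type*} (M : I → I → ℂ) (l m p i4 i5 : I)
    (h1 : l ≠ m) (h2 : l ≠ p) (h3 : l ≠ i4) (h4 : l ≠ i5)
    (h5 : m ≠ p) (h6 : m ≠ i4) (h7 : m ≠ i5)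
    (h8 : p ≠ i4) (h9 : p ≠ i5) (h10 : i4 ≠ i5) :
    form (vvec M i4 i5 ![l] ![m]) (vvec M i4 i5 ![p, l] ![p, m]) = 0
      ∧ form (vvec M i4 i5 ![l] ![m]) (vvec M i4 i5 ![p] ![m]) = 0 := by
  constructor <;>
  · simp only [form, vvec0, vvec1, vvec2, vvec3, vvec4, vvec5,
      app11, app12, app21, app22, minor4, minor3, minor2, minor1]
    ring
end
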